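/- (Proposition 1.) Fix a measurable state space E, a measurable safe set 𝕊 ⊆ E, an initial state s_0, and a horizon N. For each k ∈ {0,…,N−1}, let π^k be a policy sequence covering times k,…,N−1, with induced closed-loop Markov kernels (κ^k_k, …, κ^k_{N−1}). Assume: (i) the initial policy sequence π^0 satisfies P[s_{1,…,N} ∈ 𝕊 | s_0; κ^0_0,…,κ^0_{N−1}] ≥ S_0 for some S_0 ∈ [0,1]; and (ii) for each k ∈ {1,…,N−1} there exists γ_k ∈ (0,1] such that for every state σ ∈ E, P[s_{k+1,…,N} ∈ 𝕊 | s_k = σ; κ^k_k,…,κ^k_{N−1}] ≥ γ_k · P[s_{k+1,…,N} ∈ 𝕊 | s_k = σ; κ^{k−1}_k,…,κ^{k−1}_{N−1}]. Then the closed-loop system obtained by applying at each time k the first kernel κ^k_k of the k-th policy sequence satisfies P[s_{1,…,N} ∈ 𝕊 | s_0; κ^0_0, κ^1_1, …, κ^{N−1}_{N−1}] ≥ (∏_{k=1}^{N−1} γ_k) · S_0. -/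
import Mathlib


open MeasureTheory ProbabilityTheory

/-- `safeProb κ S k m σ` : probability that the time-inhomogeneous Markov chain with
kernels `κ`, started at state `σ` at time `k`, has its next `m` states
(at times `k+1, …, k+m`) all in `S` (the remaining mission-wide probability of safety). -/
noncomputable def safeProb {E : Type*} [MeasurableSpace E]
    (κ : ℕ → Kernel E E) (S : Set E) : ℕ → ℕ → E → ENNReal
  | _, 0, _ => 1
  | k, m + 1, σ => ∫⁻ σ', S.indicator (safeProb κ S (k + 1) m) σ' ∂(κ k σ)

lemma safeProb_congr {E : Type*} [MeasurableSpace E]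
    (κ₁ κ₂ : ℕ → Kernel E E) (S : Set E) :
    ∀ m k, (∀ t, k ≤ t → t < k + m → κ₁ t = κ₂ t) →
      ∀ σ, safeProb κ₁ S k m σ = safeProb κ₂ S k m σ := by
  intro m
  induction m with
  | zero => intro k _ σ; rfl
  | succ m ih =>
    intro k h σ
    have hk : κ₁ k = κ₂ k := h k le_rfl (by omega)
    simp only [safeProb, hk]
    refine lintegral_congr fun σ' => ?_
    have : safeProb κ₁ S (k+1) m = safeProb κ₂ S (k+1) m := by
      funext x; exact ih (k+1) (fun t ht ht' => h t (by omega) (by omega)) x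
    rw [this]

lemma safeProb_prefix_mono {E : Type*} [MeasurableSpace E]
    (κ₁ κ₂ : ℕ → Kernel E E) (S : Set E) (c : ENNReal) (hc : c ≠ ⊤) :
    ∀ p k m', (∀ t, k ≤ t → t < k + p → κ₁ t = κ₂ t) →
      (∀ σ, c * safeProb κ₂ S (k + p) m' σ ≤ safeProb κ₁ S (k + p) m' σ) →
      ∀ σ, c * safeProb κ₂ S k (p + m') σ ≤ safeProb κ₁ S k (p + m') σ := by
  intro p
  induction p with
  | zero => intro k m' _ h σ; simpa using h σ
  | succ p ih =>
    intro k m' hagree h σ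
    have hk : κ₁ k = κ₂ k := hagree k le_rfl (by omega)
    have hstep : ∀ σ', c * safeProb κ₂ S (k+1) (p + m') σ' ≤ safeProb κ₁ S (k+1) (p + m') σ' := by
      refine ih (k+1) m' (fun t ht ht' => hagree t (by omega) (by omega)) ?_
      intro σ'
      have : k + 1 + p = k + (p + 1) := by omega
      rw [this]; exact h σ'
    have hps : p + 1 + m' = (p + m') + 1 := by omega
    rw [hps]
    simp only [safeProb, hk]
    rw [← lintegral_const_mul' c _ hc]
    refine lintegral_mono fun σ' => ?_
    by_cases hmem : σ' ∈ S
    · simp [Set.indicator_of_mem hmem, hstep σ']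
    · simp [Set.indicator_of_notMem hmem]

/-- **Proposition 1.** For each time `k`, let `κ k` be the family of
closed-loop Markov kernels induced by the policy sequence `π^k` (of which only the
kernels `κ k t` for `t = k, …, N-1` are relevant). Assume the initial policy sequence
achieves MWPS at least `S₀`, and each policy update satisfies the `γ k`-discounted
remaining-MWPS constraint at every state. Then the shrinking-horizon closed-loop system
`t ↦ κ t t`, applying at each time `k` the first kernel of the `k`-th policy sequence,
achieves MWPS at least `(∏ k ∈ {1,…,N-1}, γ k) * S₀`. -/
theorem mwps_shrinking_horizon {E : Type*} [MeasurableSpace E]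
    (κ : ℕ → ℕ → Kernel E E) (hκ : ∀ j t, IsMarkovKernel (κ j t))
    (S : Set E) (hS : MeasurableSet S)
    (N : ℕ) (hN : 1 ≤ N) (s₀ : E)
    (S₀ : ENNReal) (hS₀ : S₀ ≤ 1)
    (γ : ℕ → ENNReal)
    (hγ0 : ∀ k ∈ Finset.Icc 1 (N - 1), 0 < γ k)
    (hγ1 : ∀ k ∈ Finset.Icc 1 (N - 1), γ k ≤ 1)
    (hinit : S₀ ≤ safeProb (κ 0) S 0 N s₀)
    (hupdate : ∀ k ∈ Finset.Icc 1 (N - 1), ∀ σ : E,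
      γ k * safeProb (κ (k - 1)) S k (N - k) σ ≤ safeProb (κ k) S k (N - k) σ) :
    (∏ k ∈ Finset.Icc 1 (N - 1), γ k) * S₀ ≤ safeProb (fun t => κ t t) S 0 N s₀ := by
  set chain : ℕ → ℕ → Kernel E E := fun j t => if t < j then κ t t else κ j t with hchain
  have key : ∀ j, j ≤ N - 1 →
      (∏ k ∈ Finset.Icc 1 j, γ k) * S₀ ≤ safeProb (chain j) S 0 N s₀ := by
    intro j
    induction j with
    | zero =>
      intro _
      have hemp : (∏ k ∈ Finset.Icc 1 0, γ k) = 1 := by simp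
      have heq : safeProb (chain 0) S 0 N s₀ = safeProb (κ 0) S 0 N s₀ :=
        safeProb_congr _ _ S N 0 (fun t _ _ => by simp [hchain]) s₀
      rw [hemp, one_mul, heq]
      exact hinit
    | succ j ih =>
      intro hj
      have hjm : j + 1 ∈ Finset.Icc 1 (N - 1) := by
        simp only [Finset.mem_Icc]; omega
      have hγt : γ (j + 1) ≠ ⊤ := (lt_of_le_of_lt (hγ1 _ hjm) (by norm_num)).ne
      have hN' : N = (j + 1) + (N - (j + 1)) := by omega
      have htail : ∀ σ, γ (j + 1) * safeProb (chain j) S (j + 1) (N - (j + 1)) σ ≤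
          safeProb (chain (j + 1)) S (j + 1) (N - (j + 1)) σ := by
        intro σ
        have e1 : safeProb (chain j) S (j + 1) (N - (j + 1)) σ
            = safeProb (κ j) S (j + 1) (N - (j + 1)) σ :=
          safeProb_congr _ _ S _ _ (fun t ht _ => by simp [hchain, Nat.not_lt.mpr (by omega : j ≤ t)]) σ
        have e2 : safeProb (chain (j + 1)) S (j + 1) (N - (j + 1)) σ
            = safeProb (κ (j + 1)) S (j + 1) (N - (j + 1)) σ :=
          safeProb_congr _ _ S _ _ (fun t ht _ => by simp [hchain, Nat.not_lt.mpr ht]) σ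
        rw [e1, e2]
        have := hupdate (j + 1) hjm σ
        simpa using this
      have hagree : ∀ t, 0 ≤ t → t < 0 + (j + 1) → chain (j + 1) t = chain j t := by
        intro t _ ht
        simp only [hchain]
        rcases Nat.lt_or_ge t j with h | h
        · simp [h, Nat.lt_succ_of_lt h]
        · have : t = j := by omega
          subst this
          simp [Nat.lt_succ_self, lt_irrefl]
      have hmain : γ (j + 1) * safeProb (chain j) S 0 N s₀ ≤ safeProb (chain (j + 1)) S 0 N s₀ := by
        rw [hN']
        exact safeProb_prefix_mono (chain (j + 1)) (chain j) S (γ (j + 1)) hγt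
          (j + 1) 0 (N - (j + 1)) hagree (fun σ => by simpa using htail σ) s₀
      calc (∏ k ∈ Finset.Icc 1 (j + 1), γ k) * S₀
          = γ (j + 1) * ((∏ k ∈ Finset.Icc 1 j, γ k) * S₀) := by
            rw [Finset.prod_Icc_succ_top (by omega)]; ring
        _ ≤ γ (j + 1) * safeProb (chain j) S 0 N s₀ :=
            mul_le_mul_right (ih (by omega)) _
        _ ≤ safeProb (chain (j + 1)) S 0 N s₀ := hmain
  have hfin := key (N - 1) le_rfl
  have : safeProb (chain (N - 1)) S 0 N s₀ = safeProb (fun t => κ t t) S 0 N s₀ := by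
    refine safeProb_congr _ _ S N 0 (fun t _ ht => ?_) s₀
    simp only [hchain]
    rcases Nat.lt_or_ge t (N - 1) with h | h
    · simp [h]
    · have : t = N - 1 := by omega
      subst this
      simp
  rwa [this] at hfin
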